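/- Let γ : ℕ × ℕ → ℕ be defined by γ(H,h) = 0 if H ≤ h and γ(H,h) = 2i where i is minimal with H ≤ β_i(h), for boundary functions β_0(x)=x, β_1(x)=2^x, β_{k+1}(x)=β_k^{(x+1)}(x). Suppose H₁,…,H_{2h} are nonnegative integers summing to at most H, with h < H, and let H⁺_i = Σ_{j<i} H_j. Then γ(H,h) ≥ 1 + (1/(2h)) Σ_{i=1}^{2h} γ(H_i, h + H⁺_i). -/

import Mathlib

/-- The Ackermann-like hierarchy: `Ack 0 N = N`, `Ack 1 N = 2^N`,
and `Ack (i+1) N` is the `(N+1)`-fold iterate of `Ack i` applied to `N`. -/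
def Ack : ℕ → ℕ → ℕ
  | 0, N => N
  | 1, N => 2 ^ N
  | (i+2), N => (Ack (i+1))^[N + 1] N


/-- `γ(H,h) = 0` if `H ≤ h`, and otherwise `2i` where `i` is minimal with
`H ≤ β_i(h)`, the boundary functions `β_i` being the Ackermann-like hierarchy. -/
noncomputable def gam (H h : ℕ) : ℕ :=
  if H ≤ h then 0 else 2 * sInf {i : ℕ | H ≤ Ack i h}

lemma le_iterate {f : ℕ → ℕ} (hf : ∀ x, x ≤ f x) (n x : ℕ) : x ≤ f^[n] x := by
  induction n with
  | zero => simp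
  | succ n ih => rw [Function.iterate_succ_apply']; exact ih.trans (hf _)

lemma ack_self_le : ∀ i x, x ≤ Ack i x := by
  intro i
  induction i with
  | zero => intro x; simp [Ack]
  | succ i ih =>
    intro x
    match i with
    | 0 => simpa [Ack] using (Nat.lt_two_pow_self (n := x)).le
    | j+1 =>
      show x ≤ (Ack (j+1+1)) x
      simp only [Ack]
      exact le_iterate ih _ x

lemma iterate_le_iterate {f : ℕ → ℕ} (hf : ∀ x, x ≤ f x) {m n : ℕ} (hmn : m ≤ n) (x : ℕ) :
    f^[m] x ≤ f^[n] x := by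
  obtain ⟨k, rfl⟩ := Nat.exists_eq_add_of_le hmn
  rw [Nat.add_comm, Function.iterate_add_apply]
  exact le_iterate hf _ _

lemma iterate_le_of_le {f g : ℕ → ℕ} (hfg : ∀ x, f x ≤ g x) (hg : Monotone g) (n x : ℕ) :
    f^[n] x ≤ g^[n] x := by
  induction n with
  | zero => simp
  | succ n ih =>
    rw [Function.iterate_succ_apply', Function.iterate_succ_apply']
    exact (hfg _).trans (hg ih)

lemma ack_mono : ∀ i, Monotone (Ack i) := by
  intro i
  induction i with
  | zero => exact fun a b hab => by simpa [Ack] using hab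
  | succ i ih =>
    match i with
    | 0 =>
      intro a b hab
      simpa [Ack] using Nat.pow_le_pow_right (by norm_num) hab
    | j+1 =>
      intro a b hab
      show Ack (j+1+1) a ≤ Ack (j+1+1) b
      simp only [Ack]
      calc (Ack (j+1))^[a+1] a ≤ (Ack (j+1))^[a+1] b := (ih.iterate _) hab
        _ ≤ (Ack (j+1))^[b+1] b := iterate_le_iterate (ack_self_le (j+1)) (by omega) b

lemma ack_le_succ (i x : ℕ) : Ack i x ≤ Ack (i+1) x := by
  match i with
  | 0 => simpa [Ack] using (Nat.lt_two_pow_self (n := x)).le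
  | j+1 =>
    show Ack (j+1) x ≤ Ack (j+1+1) x
    simp only [Ack]
    rw [Function.iterate_succ_apply]
    exact le_iterate (ack_self_le _) _ _

lemma ack_index_mono {i j : ℕ} (hij : i ≤ j) (x : ℕ) : Ack i x ≤ Ack j x := by
  induction j with
  | zero => simp [Nat.le_zero.mp hij]
  | succ j ih =>
    rcases Nat.lt_or_ge i (j+1) with hlt | hge
    · exact (ih (by omega)).trans (ack_le_succ j x)
    · have : i = j + 1 := by omega
      simp [this]

lemma ack_succ_lt (n h : ℕ) (hh : 1 ≤ h) : Ack (n+1) h < Ack (n+2) h := by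
  show _ < (Ack (n+1))^[h + 1] h
  obtain ⟨k, rfl⟩ : ∃ k, h = k + 1 := ⟨h - 1, by omega⟩
  have h1 : Ack (n+1) (k+1) ≤ (Ack (n+1))^[k+1] (k+1) := by
    rw [Function.iterate_succ_apply]
    exact le_iterate (ack_self_le _) _ _
  rw [show k+1+1 = (k+1)+1 from rfl, Function.iterate_succ_apply']
  calc Ack (n+1) (k+1) ≤ (Ack (n+1))^[k+1] (k+1) := h1
    _ < 2 ^ ((Ack (n+1))^[k+1] (k+1)) := Nat.lt_two_pow_self
    _ = Ack 1 ((Ack (n+1))^[k+1] (k+1)) := by simp [Ack]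
    _ ≤ Ack (n+1) ((Ack (n+1))^[k+1] (k+1)) := ack_index_mono (by omega) _

lemma ack_unbounded (h : ℕ) (hh : 1 ≤ h) (H : ℕ) : ∃ i, H ≤ Ack i h := by
  refine ⟨H + 1, ?_⟩
  have key : ∀ n, n ≤ Ack (n+1) h := by
    intro n
    induction n with
    | zero => exact Nat.zero_le _
    | succ n ih => exact lt_of_le_of_lt ih (ack_succ_lt n h hh)
  exact key H

/-- The recurrence Eq. (grec): `γ(H,h) ≥ 1 + (1/(2h)) Σ_i γ(H_i, h + H⁺_i)`. -/
theorem gamma_recurrence (h H : ℕ) (hh : 1 ≤ h) (hH : h < H)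
    (Hs : Fin (2 * h) → ℕ) (hsum : (∑ i, Hs i) ≤ H) :
    2 * h + ∑ i, gam (Hs i)
        (h + ∑ j ∈ Finset.univ.filter (fun j => j < i), Hs j) ≤
      2 * h * gam H h := by
  classical
  set S : Fin (2*h) → ℕ :=
    fun i => h + ∑ j ∈ Finset.univ.filter (fun j => j < i), Hs j with hS
  have hne : {i : ℕ | H ≤ Ack i h}.Nonempty := ack_unbounded h hh H
  set i₀ := sInf {i : ℕ | H ≤ Ack i h} with hi₀def
  have hmem : H ≤ Ack i₀ h := Nat.sInf_mem hne
  have hi₀pos : 1 ≤ i₀ := by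
    by_contra hcon
    have : i₀ = 0 := by omega
    rw [this] at hmem
    simp [Ack] at hmem
    omega
  obtain ⟨m, hm⟩ : ∃ m, i₀ = m + 1 := ⟨i₀ - 1, by omega⟩
  rw [hm] at hmem
  have hgam : gam H h = 2 * (m + 1) := by
    rw [gam, if_neg (not_le.mpr hH), ← hi₀def, hm]
  have hhS : ∀ i, h ≤ S i := fun i => Nat.le_add_right _ _
  have hHsle : ∀ i : Fin (2*h), Hs i ≤ H :=
    fun i => (Finset.single_le_sum (fun _ _ => Nat.zero_le _) (Finset.mem_univ i)).trans hsum
  -- bound on each term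
  have term_le : ∀ i : Fin (2*h), gam (Hs i) (S i) ≤ 2 * (m + 1) := by
    intro i
    rw [gam]
    split
    · omega
    · have hmemi : Hs i ≤ Ack (m+1) (S i) :=
        ((hHsle i).trans hmem).trans (ack_mono (m+1) (hhS i))
      exact Nat.mul_le_mul_left 2 (Nat.sInf_le hmemi)
  have term_le_good : ∀ i : Fin (2*h), Hs i ≤ Ack m (S i) → gam (Hs i) (S i) ≤ 2 * m := by
    intro i hi
    rw [gam]
    split
    · omega
    · exact Nat.mul_le_mul_left 2 (Nat.sInf_le hi)
  -- bad set
  set Bad : Finset (Fin (2*h)) := Finset.univ.filter (fun i => Ack m (S i) < Hs i) with hBad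
  -- the accumulation function g
  set g : ℕ → ℕ := fun x => max (2*x) (Ack m x) with hg
  have hgmono : Monotone g := by
    intro a b hab
    exact max_le_max (by omega) (ack_mono m hab)
  have hginfl : ∀ x, x ≤ g x := fun x => le_trans (by omega) (le_max_left _ _)
  -- rewrite S in terms of val-filters
  have hfil : ∀ i : Fin (2*h), Finset.univ.filter (fun j => j < i)
      = Finset.univ.filter (fun j : Fin (2*h) => (j:ℕ) < (i:ℕ)) := by
    intro i
    apply Finset.filter_congr
    intro j _
    simp only [eq_iff_iff, Fin.lt_def]
  have hSval : ∀ i : Fin (2*h), S i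
      = h + ∑ j ∈ Finset.univ.filter (fun j : Fin (2*h) => (j:ℕ) < (i:ℕ)), Hs j := by
    intro i
    simp only [hS]
    rw [hfil i]
  -- filters at n+1
  have filter_succ_mem : ∀ (A : Finset (Fin (2*h))) (n : ℕ) (hn : n < 2*h),
      (⟨n, hn⟩ : Fin (2*h)) ∈ A →
      A.filter (fun j : Fin (2*h) => (j:ℕ) < n+1) = insert ⟨n, hn⟩ (A.filter (fun j : Fin (2*h) => (j:ℕ) < n)) := by
    intro A n hn hiA
    ext j
    simp only [Finset.mem_filter, Finset.mem_insert]
    constructor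
    · rintro ⟨hjA, hjlt⟩
      rcases Nat.lt_or_ge (j:ℕ) n with hlt | hge
      · exact Or.inr ⟨hjA, hlt⟩
      · exact Or.inl (Fin.ext (show (j:ℕ) = n by omega))
    · rintro (rfl | ⟨hjA, hjlt⟩)
      · exact ⟨hiA, Nat.lt_succ_self n⟩
      · exact ⟨hjA, by omega⟩
  have filter_succ_not : ∀ (A : Finset (Fin (2*h))) (n : ℕ) (hn : n < 2*h),
      (⟨n, hn⟩ : Fin (2*h)) ∉ A →
      A.filter (fun j : Fin (2*h) => (j:ℕ) < n+1) = A.filter (fun j : Fin (2*h) => (j:ℕ) < n) := by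
    intro A n hn hiA
    ext j
    simp only [Finset.mem_filter]
    constructor
    · rintro ⟨hjA, hjlt⟩
      refine ⟨hjA, ?_⟩
      rcases Nat.lt_or_ge (j:ℕ) n with hlt | hge
      · exact hlt
      · exfalso; apply hiA
        have : j = (⟨n, hn⟩ : Fin (2*h)) := Fin.ext (show (j:ℕ) = n by omega)
        rwa [this] at hjA
    · rintro ⟨hjA, hjlt⟩
      exact ⟨hjA, by omega⟩
    -- the growth claim
  have claim : ∀ n : ℕ, g^[(Bad.filter (fun j : Fin (2*h) => (j:ℕ) < n)).card] h
      ≤ h + ∑ j ∈ Finset.univ.filter (fun j : Fin (2*h) => (j:ℕ) < n), Hs j := by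
    intro n
    induction n with
    | zero => simp
    | succ n ih =>
      by_cases hn : n < 2*h
      · have huniv := filter_succ_mem Finset.univ n hn (Finset.mem_univ _)
        have hnotmem : (⟨n, hn⟩ : Fin (2*h)) ∉
            Finset.univ.filter (fun j : Fin (2*h) => (j:ℕ) < n) := by simp
        have hsum' : ∑ j ∈ Finset.univ.filter (fun j : Fin (2*h) => (j:ℕ) < n+1), Hs j
            = Hs ⟨n, hn⟩ + ∑ j ∈ Finset.univ.filter (fun j : Fin (2*h) => (j:ℕ) < n), Hs j := by
          rw [huniv, Finset.sum_insert hnotmem]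
        by_cases hib : (⟨n, hn⟩ : Fin (2*h)) ∈ Bad
        · have hbadf := filter_succ_mem Bad n hn hib
          have hnm : (⟨n, hn⟩ : Fin (2*h)) ∉ Bad.filter (fun j : Fin (2*h) => (j:ℕ) < n) := by
            simp [Finset.mem_filter]
          rw [hbadf, Finset.card_insert_of_notMem hnm, hsum',
            Function.iterate_succ_apply']
          have hAck : Ack m (S ⟨n, hn⟩) < Hs ⟨n, hn⟩ := by
            have := Finset.mem_filter.mp hib
            exact this.2
          rw [hSval ⟨n, hn⟩] at hAck
          have hAck' : Ack m (h + ∑ j ∈ Finset.univ.filter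
              (fun j : Fin (2*h) => (j:ℕ) < n), Hs j) < Hs ⟨n, hn⟩ := hAck
          have h1 : h + ∑ j ∈ Finset.univ.filter (fun j : Fin (2*h) => (j:ℕ) < n), Hs j
              ≤ Ack m (h + ∑ j ∈ Finset.univ.filter (fun j : Fin (2*h) => (j:ℕ) < n), Hs j) :=
            ack_self_le _ _
          have h2 : g (g^[(Bad.filter (fun j : Fin (2*h) => (j:ℕ) < n)).card] h)
              ≤ g (h + ∑ j ∈ Finset.univ.filter (fun j : Fin (2*h) => (j:ℕ) < n), Hs j) :=
            hgmono ih
          refine h2.trans ?_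
          apply max_le <;> omega
        · have hbadf := filter_succ_not Bad n hn hib
          rw [hbadf, hsum']
          omega
      · have e1 : ∀ (A : Finset (Fin (2*h))),
            A.filter (fun j : Fin (2*h) => (j:ℕ) < n+1) = A.filter (fun j : Fin (2*h) => (j:ℕ) < n) := by
          intro A
          apply Finset.filter_congr
          intro j _
          have := j.isLt
          omega
        rw [e1, e1]
        exact ih
  -- card bound
  have cardBad : Bad.card ≤ h := by
    by_contra hcon
    push_neg at hcon
    have hne' : Bad.Nonempty := Finset.card_pos.mp (by omega)
    set imax := Bad.max' hne' with himax
    have hmaxmem : imax ∈ Bad := Bad.max'_mem hne'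
    have herase : Bad.filter (fun j : Fin (2*h) => (j:ℕ) < (imax:ℕ)) = Bad.erase imax := by
      ext j
      simp only [Finset.mem_filter, Finset.mem_erase]
      constructor
      · rintro ⟨hjB, hlt⟩
        refine ⟨fun he => ?_, hjB⟩
        rw [he] at hlt; omega
      · rintro ⟨hne2, hjB⟩
        refine ⟨hjB, ?_⟩
        have hle : j ≤ imax := Finset.le_max' _ _ hjB
        have : (j:ℕ) ≠ (imax:ℕ) := fun he => hne2 (Fin.ext he)
        have := Fin.le_def.mp hle
        omega
    have hcard : h ≤ (Bad.filter (fun j : Fin (2*h) => (j:ℕ) < (imax:ℕ))).card := by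
      rw [herase, Finset.card_erase_of_mem hmaxmem]
      omega
    have ht := claim (imax:ℕ)
    have hgh : g^[h] h ≤ h + ∑ j ∈ Finset.univ.filter
        (fun j : Fin (2*h) => (j:ℕ) < (imax:ℕ)), Hs j :=
      (iterate_le_iterate hginfl hcard h).trans ht
    have hAck : Ack m (S imax) < Hs imax := (Finset.mem_filter.mp hmaxmem).2
    rw [hSval imax] at hAck
    have hile : Hs imax ≤ H := hHsle imax
    set T := ∑ j ∈ Finset.univ.filter (fun j : Fin (2*h) => (j:ℕ) < (imax:ℕ)), Hs j with hT
    rcases Nat.eq_zero_or_pos m with rfl | hmpos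
    · -- m = 0 : H ≤ 2^h
      have hH2 : H ≤ 2^h := by simpa [Ack] using hmem
      have hgpow : ∀ k x, 2^k * x ≤ g^[k] x := by
        intro k
        induction k with
        | zero => simp
        | succ k ih =>
          intro x
          rw [Function.iterate_succ_apply']
          calc 2^(k+1) * x = 2 * (2^k * x) := by ring
            _ ≤ 2 * g^[k] x := by have := ih x; omega
            _ ≤ g (g^[k] x) := le_max_left _ _
      have h2h : 2^h * h ≤ g^[h] h := hgpow h h
      have h2 : 2^h ≤ 2^h * h := Nat.le_mul_of_pos_right _ hh
      have hAck0 : h + T < Hs imax := by simpa [Ack] using hAck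
      omega
    · -- m ≥ 1
      obtain ⟨m', rfl⟩ : ∃ m', m = m' + 1 := ⟨m - 1, by omega⟩
      have hcmp : (Ack (m'+1))^[h] h ≤ g^[h] h :=
        iterate_le_of_le (fun x => le_max_right _ _) hgmono h h
      have hAckmono : Ack (m'+1) ((Ack (m'+1))^[h] h) ≤ Ack (m'+1) (h + T) :=
        ack_mono _ (hcmp.trans hgh)
      have hiter : Ack (m'+1) ((Ack (m'+1))^[h] h) = (Ack (m'+1))^[h+1] h := by
        rw [Function.iterate_succ_apply']
      have hdef : Ack (m'+2) h = (Ack (m'+1))^[h+1] h := by simp [Ack]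
      rw [hiter, ← hdef] at hAckmono
      have : H ≤ Ack (m'+1) (h + T) := hmem.trans hAckmono
      omega
  -- final sum bound
  rw [hgam]
  have hsplit : ∑ i, gam (Hs i) (S i)
      = ∑ i ∈ Finset.univ.filter (fun i => Ack m (S i) < Hs i), gam (Hs i) (S i)
        + ∑ i ∈ Finset.univ.filter (fun i => ¬ Ack m (S i) < Hs i), gam (Hs i) (S i) :=
    (Finset.sum_filter_add_sum_filter_not _ _ _).symm
  have hb1 : ∑ i ∈ Finset.univ.filter (fun i => Ack m (S i) < Hs i), gam (Hs i) (S i)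
      ≤ Bad.card * (2 * (m+1)) := by
    rw [hBad]
    apply Finset.sum_le_card_nsmul
    intro i _
    exact term_le i
  have hb2 : ∑ i ∈ Finset.univ.filter (fun i => ¬ Ack m (S i) < Hs i), gam (Hs i) (S i)
      ≤ (Finset.univ.filter (fun i => ¬ Ack m (S i) < Hs i)).card * (2 * m) := by
    apply Finset.sum_le_card_nsmul
    intro i hi
    exact term_le_good i (not_lt.mp (Finset.mem_filter.mp hi).2)
  have hcards : Bad.card
      + (Finset.univ.filter (fun i : Fin (2*h) => ¬ Ack m (S i) < Hs i)).card = 2*h := by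
    rw [hBad, Finset.card_filter_add_card_filter_not]
    simp
  set c1 := Bad.card
  set c2 := (Finset.univ.filter (fun i : Fin (2*h) => ¬ Ack m (S i) < Hs i)).card
  have hfin : 2*h + (c1 * (2*(m+1)) + c2 * (2*m)) ≤ 2*h*(2*(m+1)) := by
    have hc2 : h ≤ c2 := by omega
    calc 2*h + (c1 * (2*(m+1)) + c2 * (2*m))
        ≤ c1 * (2*(m+1)) + c2 * (2*m) + 2*c2 := by omega
      _ = c1 * (2*(m+1)) + c2 * (2*(m+1)) := by ring
      _ = (c1 + c2) * (2*(m+1)) := by ring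
      _ = 2*h*(2*(m+1)) := by rw [hcards]
  calc 2*h + ∑ i, gam (Hs i) (S i)
      ≤ 2*h + (c1 * (2*(m+1)) + c2 * (2*m)) := by
        rw [hsplit]; omega
    _ ≤ 2*h*(2*(m+1)) := hfin
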